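/- For every nonnegative integer i, the Bernoulli polynomial satisfies B_i(x) = Σ_{k=0}^{i} (-1)^k (k!/(k+1)) R₂(i,k,x), where R₂(i,k,x) are Carlitz's weighted Stirling numbers of the second kind. -/

import Mathlib

open Finset PowerSeries

/-- Carlitz's weighted Stirling numbers of the second kind `R₂(m,k,x)`, defined by
`(1/k!) e^{xt}(e^t-1)^k = ∑_{m≥0} R₂(m,k,x) t^m/m!`. -/
noncomputable def R2 (m k : ℕ) (x : ℂ) : ℂ :=
  (Nat.factorial m : ℂ) / (Nat.factorial k : ℂ) *
    PowerSeries.coeff m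
      (PowerSeries.rescale x (PowerSeries.exp ℂ) * (PowerSeries.exp ℂ - 1) ^ k)

lemma coeff_u_pow_eq_zero {n k : ℕ} (h : n < k) :
    PowerSeries.coeff n ((PowerSeries.exp ℂ - 1) ^ k) = 0 := by
  have hdvd : (PowerSeries.X : ℂ⟦X⟧) ^ k ∣ (PowerSeries.exp ℂ - 1) ^ k :=
    pow_dvd_pow_of_dvd (PowerSeries.X_dvd_iff.mpr (by
      simp [PowerSeries.constantCoeff_exp])) k
  exact (PowerSeries.X_pow_dvd_iff.mp hdvd) n h

lemma derivative_exp' : d⁄dX ℂ (PowerSeries.exp ℂ) = PowerSeries.exp ℂ := by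
  ext n
  rw [PowerSeries.coeff_derivative, PowerSeries.coeff_exp, PowerSeries.coeff_exp]
  rw [show ((n : ℂ) + 1) = algebraMap ℚ ℂ ((n : ℚ) + 1) by push_cast; simp, ← map_mul]
  congr 1
  rw [Nat.factorial_succ]
  push_cast
  have h : (n.factorial : ℚ) ≠ 0 := by exact_mod_cast n.factorial_ne_zero
  field_simp

noncomputable def Lser (N : ℕ) : ℂ⟦X⟧ :=
  ∑ k ∈ Finset.range (N + 1),
    (((-1 : ℂ)) ^ k / ((k : ℂ) + 1)) • (PowerSeries.exp ℂ - 1) ^ (k + 1)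

lemma derivative_Lser (N : ℕ) :
    d⁄dX ℂ (Lser N) = 1 - (-(PowerSeries.exp ℂ - 1)) ^ (N + 1) := by
  have hu : d⁄dX ℂ (PowerSeries.exp ℂ - 1) = PowerSeries.exp ℂ := by
    rw [map_sub, derivative_exp', Derivation.map_one_eq_zero, sub_zero]
  have hterm : ∀ k ∈ Finset.range (N + 1),
      d⁄dX ℂ ((((-1 : ℂ)) ^ k / ((k : ℂ) + 1)) • (PowerSeries.exp ℂ - 1) ^ (k + 1))
        = (-(PowerSeries.exp ℂ - 1)) ^ k - (-(PowerSeries.exp ℂ - 1)) ^ (k + 1) := by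
    intro k _
    rw [PowerSeries.smul_eq_C_mul, Derivation.leibniz, PowerSeries.derivative_C, smul_zero,
      add_zero, smul_eq_mul, Derivation.leibniz_pow, hu, Nat.add_sub_cancel,
      ← Nat.cast_smul_eq_nsmul ℂ (k + 1), PowerSeries.smul_eq_C_mul, smul_eq_mul,
      ← mul_assoc, ← map_mul]
    have hk1 : ((k : ℂ) + 1) ≠ 0 := Nat.cast_add_one_ne_zero k
    have hc : ((-1 : ℂ)) ^ k / ((k : ℂ) + 1) * ((k + 1 : ℕ) : ℂ) = (-1 : ℂ) ^ k := by
      push_cast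
      field_simp
    rw [hc, show PowerSeries.C ((-1 : ℂ) ^ k) = (-1 : ℂ⟦X⟧) ^ k by
      rw [map_pow, map_neg, map_one], pow_succ, neg_pow (PowerSeries.exp ℂ - 1) k]
    ring
  rw [Lser, map_sum, Finset.sum_congr rfl hterm,
    Finset.sum_range_sub' (fun k => (-(PowerSeries.exp ℂ - 1)) ^ k)]
  simp

lemma coeff_Lser {N n : ℕ} (hn : n ≤ N + 1) :
    PowerSeries.coeff n (Lser N) = PowerSeries.coeff n (PowerSeries.X : ℂ⟦X⟧) := by
  cases n with
  | zero =>
    have hz : ∀ k ∈ Finset.range (N + 1),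
        PowerSeries.coeff 0 ((((-1 : ℂ)) ^ k / ((k : ℂ) + 1)) •
          (PowerSeries.exp ℂ - 1) ^ (k + 1)) = 0 := fun k _ => by
      rw [map_smul, coeff_u_pow_eq_zero (Nat.succ_pos k), smul_zero]
    rw [Lser, map_sum, Finset.sum_eq_zero hz]
    simp
  | succ m =>
    have h1 := congrArg (PowerSeries.coeff m) (derivative_Lser N)
    rw [PowerSeries.coeff_derivative, map_sub] at h1
    have h2 : PowerSeries.coeff m ((-(PowerSeries.exp ℂ - 1)) ^ (N + 1)) = 0 := by
      rw [show (-(PowerSeries.exp ℂ - 1)) = PowerSeries.C (-1) * (PowerSeries.exp ℂ - 1) by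
        simp, mul_pow, ← map_pow, PowerSeries.coeff_C_mul,
        coeff_u_pow_eq_zero (by omega), mul_zero]
    rw [h2, sub_zero] at h1
    have hm : ((m : ℂ) + 1) ≠ 0 := Nat.cast_add_one_ne_zero m
    have h3 : PowerSeries.coeff (m + 1) (Lser N) =
        PowerSeries.coeff m (1 : ℂ⟦X⟧) / ((m : ℂ) + 1) := by
      field_simp [← h1]
      exact h1
    rw [h3, PowerSeries.coeff_X]
    rcases Nat.eq_zero_or_pos m with hm0 | hm0
    · subst hm0; simp
    · rw [PowerSeries.coeff_one, if_neg (by omega), if_neg (by omega), zero_div]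

noncomputable def Tser (N : ℕ) : ℂ⟦X⟧ :=
  ∑ k ∈ Finset.range (N + 1),
    (((-1 : ℂ)) ^ k / ((k : ℂ) + 1)) • (PowerSeries.exp ℂ - 1) ^ k

lemma Tser_mul_u (N : ℕ) : Tser N * (PowerSeries.exp ℂ - 1) = Lser N := by
  rw [Tser, Lser, Finset.sum_mul]
  exact Finset.sum_congr rfl fun k _ => by rw [smul_mul_assoc, ← pow_succ]

lemma coeff_B_eq (x : ℂ) (N : ℕ) :
    ∀ n ≤ N,
    PowerSeries.coeff n
        (PowerSeries.mk fun n =>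
          Polynomial.aeval x ((1 / (n.factorial : ℚ)) • Polynomial.bernoulli n))
      = PowerSeries.coeff n (PowerSeries.rescale x (PowerSeries.exp ℂ) * Tser N) := by
  intro n
  induction n using Nat.strong_induction_on with
  | _ n IH =>
  intro hn
  set B : ℂ⟦X⟧ := PowerSeries.mk fun n =>
    Polynomial.aeval x ((1 / (n.factorial : ℚ)) • Polynomial.bernoulli n) with hBdef
  set E : ℂ⟦X⟧ := PowerSeries.rescale x (PowerSeries.exp ℂ) with hEdef
  set u : ℂ⟦X⟧ := PowerSeries.exp ℂ - 1 with hudef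
  have hBu : B * u = PowerSeries.X * E := Polynomial.bernoulli_generating_function x
  have key : PowerSeries.coeff (n + 1) ((E * Tser N - B) * u) = 0 := by
    rw [sub_mul, mul_assoc, Tser_mul_u, hBu, map_sub]
    have hEL : PowerSeries.coeff (n + 1) (E * Lser N) =
        PowerSeries.coeff (n + 1) (E * PowerSeries.X) := by
      rw [PowerSeries.coeff_mul, PowerSeries.coeff_mul]
      refine Finset.sum_congr rfl fun p hp => ?_
      replace hp : p.1 + p.2 = n + 1 := Finset.HasAntidiagonal.mem_antidiagonal.mp hp
      rw [coeff_Lser (by omega)]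
    rw [hEL, mul_comm E PowerSeries.X, sub_self]
  rw [PowerSeries.coeff_mul,
    Finset.Nat.sum_antidiagonal_eq_sum_range_succ
      (fun a b => PowerSeries.coeff a (E * Tser N - B) * PowerSeries.coeff b u),
    Finset.sum_range_succ, Finset.sum_range_succ, Nat.sub_self, Nat.add_sub_cancel_left] at key
  have hu0 : PowerSeries.coeff 0 u = 0 := by
    simp [hudef, PowerSeries.coeff_zero_eq_constantCoeff, PowerSeries.constantCoeff_exp]
  have hu1 : PowerSeries.coeff 1 u = 1 := by
    simp [hudef, PowerSeries.coeff_exp, PowerSeries.coeff_one]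
  have hzero : ∀ a ∈ Finset.range n,
      PowerSeries.coeff a (E * Tser N - B) * PowerSeries.coeff (n + 1 - a) u = 0 := by
    intro a ha
    rw [Finset.mem_range] at ha
    rw [map_sub, IH a ha (by omega), sub_self, zero_mul]
  rw [Finset.sum_eq_zero hzero, zero_add, hu0, mul_zero, add_zero, hu1, mul_one,
    map_sub, sub_eq_zero] at key
  exact key.symm

theorem bernoulli_eq_alternating_R2_sum (i : ℕ) (x : ℂ) :
    Polynomial.aeval x (Polynomial.bernoulli i) =
      ∑ k ∈ Finset.range (i + 1),
        (-1) ^ k * (Nat.factorial k : ℂ) / ((k : ℂ) + 1) * R2 i k x := by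
  have hB := coeff_B_eq x i i le_rfl
  rw [PowerSeries.coeff_mk] at hB
  have hfac : (i.factorial : ℂ) ≠ 0 := by exact_mod_cast i.factorial_ne_zero
  have hLHS : Polynomial.aeval x (Polynomial.bernoulli i) =
      (i.factorial : ℂ) *
        Polynomial.aeval x ((1 / (i.factorial : ℚ)) • Polynomial.bernoulli i) := by
    rw [map_smul, Rat.smul_def]
    push_cast
    field_simp
  rw [hLHS, hB, Tser, Finset.mul_sum, map_sum, Finset.mul_sum]
  refine Finset.sum_congr rfl fun k hk => ?_
  rw [mul_smul_comm, map_smul, R2, smul_eq_mul]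
  have hkfac : (k.factorial : ℂ) ≠ 0 := by exact_mod_cast k.factorial_ne_zero
  have hk1 : ((k : ℂ) + 1) ≠ 0 := Nat.cast_add_one_ne_zero k
  field_simp
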